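/- Let X be a well-filtered topological space such that Q(X), the poset of nonempty compact saturated subsets ordered by reverse inclusion, is first-countable in the upper Vietoris topology. Then Q(X) has one-step closure. -/

import Mathlib

open Set

section OrderDefs

variable {L : Type*} [Preorder L]

/-- Downward closure `↓A`. -/
def dw (A : Set L) : Set L := {x | ∃ a ∈ A, x ≤ a}

/-- Upward closure `↑A`. -/
def up (A : Set L) : Set L := {x | ∃ a ∈ A, a ≤ x}

/-- Scott closure of a set. -/
def scottCl (A : Set L) : Set L := @closure L (Topology.scott L Set.univ) A

/-- `A' = {x : ∃ directed D ⊆ ↓A with x = sup D}`. -/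
def oneStep (A : Set L) : Set L :=
  {x | ∃ D : Set L, D ⊆ dw A ∧ D.Nonempty ∧ DirectedOn (· ≤ ·) D ∧ IsLUB D x}

/-- `A'' = {x : ∃ directed D ⊆ ↓A with x ≤ sup D}`. -/
def weakOneStep (A : Set L) : Set L :=
  {x | ∃ D : Set L, D ⊆ dw A ∧ D.Nonempty ∧ DirectedOn (· ≤ ·) D ∧ ∃ y, IsLUB D y ∧ x ≤ y}

/-- A poset has one-step closure if `cl(A) = A'` for all `A`. -/
def HasOneStepClosure (L : Type*) [Preorder L] : Prop :=
  ∀ A : Set L, scottCl A = oneStep A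

/-- A poset has weak one-step closure if `cl(A) = A''` for all `A`. -/
def HasWeakOneStepClosure (L : Type*) [Preorder L] : Prop :=
  ∀ A : Set L, scottCl A = weakOneStep A

/-- Meet continuity: `x ≤ sup D` implies `x ∈ cl(↓D ∩ ↓x)`. -/
def MeetContinuous (L : Type*) [Preorder L] : Prop :=
  ∀ x : L, ∀ D : Set L, D.Nonempty → DirectedOn (· ≤ ·) D → ∀ s, IsLUB D s → x ≤ s →
    x ∈ scottCl (dw D ∩ dw ({x} : Set L))

/-- The way-below relation `x ≪ y`. -/
def wayBelow (x y : L) : Prop :=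
  ∀ D : Set L, D.Nonempty → DirectedOn (· ≤ ·) D → ∀ s, IsLUB D s → y ≤ s →
    (D ∩ up ({x} : Set L)).Nonempty

/-- The weakly way-below relation `x ≪_w y`. -/
def weaklyWayBelow (x y : L) : Prop :=
  ∀ D : Set L, D.Nonempty → DirectedOn (· ≤ ·) D → IsLUB D y →
    (D ∩ up ({x} : Set L)).Nonempty

/-- A continuous poset: each `⇓x` is directed with supremum `x`. -/
def ContinuousPoset (L : Type*) [Preorder L] : Prop :=
  ∀ x : L, {y | wayBelow y x}.Nonempty ∧ DirectedOn (· ≤ ·) {y | wayBelow y x} ∧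
    IsLUB {y | wayBelow y x} x

/-- An exact poset: each `⇓_w x` is directed with supremum `x`. -/
def ExactPoset (L : Type*) [Preorder L] : Prop :=
  ∀ x : L, {y | weaklyWayBelow y x}.Nonempty ∧ DirectedOn (· ≤ ·) {y | weaklyWayBelow y x} ∧
    IsLUB {y | weaklyWayBelow y x} x

/-- `F ≪ x` for a set `F`: every directed `D` with `sup D ≥ x` meets `↑F`. -/
def finWayBelow (F : Set L) (x : L) : Prop :=
  ∀ D : Set L, D.Nonempty → DirectedOn (· ≤ ·) D → ∀ s, IsLUB D s → x ≤ s →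
    (D ∩ up F).Nonempty

/-- A quasicontinuous poset: each `fin(x)` is a directed family (Smyth preorder)
with `↑x = ⋂_{F ∈ fin(x)} ↑F`. -/
def QuasicontinuousPoset (L : Type*) [Preorder L] : Prop :=
  ∀ x : L, {F : Set L | F.Finite ∧ finWayBelow F x}.Nonempty ∧
    DirectedOn (fun F G => up G ⊆ up F) {F : Set L | F.Finite ∧ finWayBelow F x} ∧
    up ({x} : Set L) = ⋂ F ∈ {F : Set L | F.Finite ∧ finWayBelow F x}, up F

/-- A dcpo: every (nonempty) directed subset has a least upper bound. -/
def IsDcpo (L : Type*) [Preorder L] : Prop :=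
  ∀ D : Set L, D.Nonempty → DirectedOn (· ≤ ·) D → ∃ x, IsLUB D x

end OrderDefs

section TopoDefs

variable {X : Type*} [TopologicalSpace X]

/-- A set is saturated if it is the intersection of all open sets containing it. -/
def IsSaturatedSet (A : Set X) : Prop := A = ⋂₀ {U : Set X | IsOpen U ∧ A ⊆ U}

/-- A space is well-filtered if for every filtered family `𝒞` of compact saturated sets
and every open `U` with `⋂𝒞 ⊆ U` there is `K ∈ 𝒞` with `K ⊆ U`. -/
def WellFiltered (X : Type*) [TopologicalSpace X] : Prop :=
  ∀ 𝒞 : Set (Set X), 𝒞.Nonempty → (∀ K ∈ 𝒞, IsCompact K ∧ IsSaturatedSet K) →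
    DirectedOn (fun A B => B ⊆ A) 𝒞 →
    ∀ U : Set X, IsOpen U → ⋂₀ 𝒞 ⊆ U → ∃ K ∈ 𝒞, K ⊆ U

end TopoDefs

/-- `Q(X)`: the nonempty compact saturated subsets of `X`. -/
def QNE (X : Type*) [TopologicalSpace X] : Type _ :=
  {K : Set X // K.Nonempty ∧ IsCompact K ∧ IsSaturatedSet K}

/-- `Q(X)` is ordered by reverse inclusion. -/
instance {X : Type*} [TopologicalSpace X] : PartialOrder (QNE X) where
  le K K' := K'.1 ⊆ K.1
  le_refl K := subset_rfl
  le_trans _ _ _ h1 h2 := Set.Subset.trans h2 h1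
  le_antisymm a b h1 h2 := Subtype.ext (Set.Subset.antisymm h2 h1)

/-- The upper Vietoris topology on `Q(X)`, generated by the sets `□U = {K : K ⊆ U}`. -/
def upperVietoris (X : Type*) [TopologicalSpace X] : TopologicalSpace (QNE X) :=
  TopologicalSpace.generateFrom {s | ∃ U : Set X, IsOpen U ∧ s = {K : QNE X | K.1 ⊆ U}}


section Aux

open Topology

variable {X : Type*} [TopologicalSpace X]

lemma isSaturatedSet_of (S : Set X)
    (h : ∀ x, x ∉ S → ∃ U, IsOpen U ∧ S ⊆ U ∧ x ∉ U) : IsSaturatedSet S := by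
  apply Set.Subset.antisymm
  · intro x hx V hV
    exact hV.2 hx
  · intro x hx
    by_contra hxS
    obtain ⟨U, hU, hSU, hxU⟩ := h x hxS
    exact hxU (hx U ⟨hU, hSU⟩)

lemma IsSaturatedSet.exists_open {S : Set X} (hS : IsSaturatedSet S) {x : X} (hx : x ∉ S) :
    ∃ U, IsOpen U ∧ S ⊆ U ∧ x ∉ U := by
  by_contra h
  push_neg at h
  apply hx
  rw [hS]
  intro U hU
  exact h U hU.1 hU.2

/-- The basic open set `□U` of the upper Vietoris topology. -/
def qbox (U : Set X) : Set (QNE X) := {K : QNE X | K.1 ⊆ U}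

lemma QNE.le_def {K K' : QNE X} : K ≤ K' ↔ K'.1 ⊆ K.1 := Iff.rfl

lemma qbox_isOpen_UV {U : Set X} (hU : IsOpen U) : IsOpen[upperVietoris X] (qbox U) :=
  TopologicalSpace.GenerateOpen.basic _ ⟨U, hU, rfl⟩

/-- Every upper-Vietoris open neighbourhood of `K` contains a basic `□U` around `K`. -/
lemma exists_qbox_subset {V : Set (QNE X)} (hV : IsOpen[upperVietoris X] V) :
    ∀ K : QNE X, K ∈ V → ∃ U, IsOpen U ∧ K.1 ⊆ U ∧ qbox U ⊆ V := by
  induction hV with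
  | basic s hs =>
    obtain ⟨U, hU, rfl⟩ := hs
    exact fun K hK => ⟨U, hU, hK, fun L hL => hL⟩
  | univ => exact fun K _ => ⟨Set.univ, isOpen_univ, Set.subset_univ _, Set.subset_univ _⟩
  | inter s t _ _ ihs iht =>
    intro K hK
    obtain ⟨U, hU, hKU, hUs⟩ := ihs K hK.1
    obtain ⟨U', hU', hKU', hUt⟩ := iht K hK.2
    exact ⟨U ∩ U', hU.inter hU', Set.subset_inter hKU hKU',
      fun L hL => ⟨hUs fun x hx => (hL hx).1, hUt fun x hx => (hL hx).2⟩⟩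
  | sUnion S _ ih =>
    intro K hK
    obtain ⟨s, hsS, hKs⟩ := hK
    obtain ⟨U, hU, hKU, hUs⟩ := ih s hsS K hKs
    exact ⟨U, hU, hKU, hUs.trans (Set.subset_sUnion_of_mem hsS)⟩

/-- In a well-filtered space, the lub of a directed family in `Q(X)` is the intersection. -/
lemma QNE.lub_eq_sInter (hwf : WellFiltered X) {d : Set (QNE X)} (hdne : d.Nonempty)
    (hdir : DirectedOn (· ≤ ·) d) {a : QNE X} (h : IsLUB d a) :
    a.1 = ⋂₀ (Subtype.val '' d) := by
  set 𝒞 : Set (Set X) := Subtype.val '' d with h𝒞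
  have h𝒞ne : 𝒞.Nonempty := hdne.image _
  have h𝒞cs : ∀ S ∈ 𝒞, IsCompact S ∧ IsSaturatedSet S := by
    rintro S ⟨H, _, rfl⟩
    exact ⟨H.2.2.1, H.2.2.2⟩
  have h𝒞dir : DirectedOn (fun A B => B ⊆ A) 𝒞 := by
    rintro S ⟨H₁, hH₁, rfl⟩ T ⟨H₂, hH₂, rfl⟩
    obtain ⟨H₃, hH₃, h₁, h₂⟩ := hdir H₁ hH₁ H₂ hH₂
    exact ⟨H₃.1, ⟨H₃, hH₃, rfl⟩, h₁, h₂⟩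
  set M : Set X := ⋂₀ 𝒞 with hM
  have hMne : M.Nonempty := by
    by_contra hemp
    rw [Set.not_nonempty_iff_eq_empty] at hemp
    obtain ⟨S, hS𝒞, hSsub⟩ := hwf 𝒞 h𝒞ne h𝒞cs h𝒞dir ∅ isOpen_empty (by rw [← hM, hemp])
    obtain ⟨H, _, rfl⟩ := hS𝒞
    exact absurd (hSsub H.2.1.some_mem) (Set.notMem_empty _)
  have hMcomp : IsCompact M := by
    apply isCompact_of_finite_subcover
    intro ι Us hUs hcov
    obtain ⟨S, hS𝒞, hSsub⟩ := hwf 𝒞 h𝒞ne h𝒞cs h𝒞dir (⋃ i, Us i) (isOpen_iUnion hUs) hcov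
    obtain ⟨t, ht⟩ := (h𝒞cs S hS𝒞).1.elim_finite_subcover Us hUs hSsub
    exact ⟨t, (Set.sInter_subset_of_mem hS𝒞).trans ht⟩
  have hMsat : IsSaturatedSet M := by
    apply isSaturatedSet_of
    intro x hx
    rw [hM, Set.mem_sInter] at hx
    push_neg at hx
    obtain ⟨S, hS𝒞, hxS⟩ := hx
    obtain ⟨U, hU, hSU, hxU⟩ := (h𝒞cs S hS𝒞).2.exists_open hxS
    exact ⟨U, hU, (Set.sInter_subset_of_mem hS𝒞).trans hSU, hxU⟩
  have hMQ : IsLUB d (⟨M, hMne, hMcomp, hMsat⟩ : QNE X) := by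
    constructor
    · intro H hHd
      exact Set.sInter_subset_of_mem ⟨H, hHd, rfl⟩
    · intro L hL
      show L.1 ⊆ M
      rintro x hx S ⟨H, hHd, rfl⟩
      exact hL hHd hx
  rw [h.unique hMQ]

/-- In a well-filtered space, `□U` is Scott-open in `Q(X)`. -/
lemma qbox_isOpen_scott (hwf : WellFiltered X) {U : Set X} (hU : IsOpen U) :
    IsOpen[Topology.scott (QNE X) Set.univ] (qbox U) := by
  letI := Topology.scott (QNE X) Set.univ
  haveI : Topology.IsScott (QNE X) Set.univ := ⟨rfl⟩
  rw [Topology.IsScott.isOpen_iff_isUpperSet_and_dirSupInaccOn (D := Set.univ)]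
  constructor
  · intro a b hab ha
    exact Set.Subset.trans hab ha
  · intro d _ hdne hdir a hlub ha
    have hint := QNE.lub_eq_sInter hwf hdne hdir hlub
    obtain ⟨S, hS𝒞, hSU⟩ := hwf (Subtype.val '' d) (hdne.image _)
      (by rintro S ⟨H, _, rfl⟩; exact ⟨H.2.2.1, H.2.2.2⟩)
      (by rintro S ⟨H₁, hH₁, rfl⟩ T ⟨H₂, hH₂, rfl⟩
          obtain ⟨H₃, hH₃, h₁, h₂⟩ := hdir H₁ hH₁ H₂ hH₂
          exact ⟨H₃.1, ⟨H₃, hH₃, rfl⟩, h₁, h₂⟩)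
      U hU (by rw [← hint]; exact ha)
    obtain ⟨H, hHd, rfl⟩ := hS𝒞
    exact ⟨H, hHd, hSU⟩

/-- From first countability, extract a decreasing sequence of basic boxes at `K`. -/
lemma exists_qbox_basis (hfc : @FirstCountableTopology (QNE X) (upperVietoris X)) (K : QNE X) :
    ∃ U : ℕ → Set X, (∀ n, IsOpen (U n)) ∧ (∀ n, K.1 ⊆ U n) ∧ Antitone U ∧
      ∀ V : Set X, IsOpen V → K.1 ⊆ V → ∃ n, ∀ L : QNE X, L.1 ⊆ U n → L.1 ⊆ V := by
  letI := upperVietoris X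
  haveI := hfc
  obtain ⟨s, hs⟩ := (nhds K).exists_antitone_basis
  have : ∀ n, ∃ W : Set X, IsOpen W ∧ K.1 ⊆ W ∧ qbox W ⊆ s n := by
    intro n
    have hsn : s n ∈ nhds K := hs.mem n
    obtain ⟨V, hVs, hV, hKV⟩ := mem_nhds_iff.mp hsn
    obtain ⟨W, hW, hKW, hWV⟩ := exists_qbox_subset hV K hKV
    exact ⟨W, hW, hKW, hWV.trans hVs⟩
  choose W hWopen hKW hWs using this
  refine ⟨fun n => ⋂ m ∈ Finset.range (n + 1), W m, ?_, ?_, ?_, ?_⟩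
  · exact fun n => isOpen_biInter_finset fun m _ => hWopen m
  · exact fun n => Set.subset_iInter₂ fun m _ => hKW m
  · intro m n hmn x hx
    rw [Set.mem_iInter₂] at hx ⊢
    intro k hk
    exact hx k (Finset.mem_range.mpr (lt_of_lt_of_le (Finset.mem_range.mp hk) (by omega)))
  · intro V hV hKV
    have hbox : qbox V ∈ nhds K := (qbox_isOpen_UV hV).mem_nhds hKV
    obtain ⟨n, hn⟩ := hs.toHasBasis.mem_iff.mp hbox
    refine ⟨n, fun L hL => ?_⟩
    have hLn : L.1 ⊆ W n := hL.trans (Set.iInter₂_subset n (Finset.self_mem_range_succ n))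
    exact hn.2 (hWs n hLn)

end Aux

/-- If `X` is well-filtered and `Q(X)` with the upper Vietoris topology is first-countable,
then `(Q(X), ⊇)` has one-step closure. -/
theorem QNE_hasOneStepClosure_of_wellFiltered_firstCountable
    {X : Type*} [TopologicalSpace X] (hwf : WellFiltered X)
    (hfc : @FirstCountableTopology (QNE X) (upperVietoris X)) :
    HasOneStepClosure (QNE X) := by
  intro A
  letI tS : TopologicalSpace (QNE X) := Topology.scott (QNE X) Set.univ
  haveI : Topology.IsScott (QNE X) Set.univ := ⟨rfl⟩
  apply Set.Subset.antisymm
  · -- hard direction: scottCl A ⊆ oneStep A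
    intro K hK
    have hmeet : ∀ U : Set X, IsOpen U → K.1 ⊆ U → ∃ a ∈ A, a.1 ⊆ U := by
      intro U hU hKU
      by_contra h
      push_neg at h
      have hsub : A ⊆ (qbox U)ᶜ := fun a ha => h a ha
      have hcl : IsClosed ((qbox U)ᶜ : Set (QNE X)) :=
        (qbox_isOpen_scott hwf hU).isClosed_compl
      exact (closure_minimal hsub hcl hK) hKU
    obtain ⟨U, hUopen, hKU, hUanti, hUbase⟩ := exists_qbox_basis hfc K
    choose a haA haU using fun n => hmeet (U n) (hUopen n) (hKU n)
    set C : ℕ → Set X := fun n => K.1 ∪ ⋃ m, ⋃ (_ : n ≤ m), (a m).1 with hC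
    have haC : ∀ n m, n ≤ m → (a m).1 ⊆ C n := by
      intro n m hnm
      exact (Set.subset_iUnion₂ (s := fun m _ => (a m).1) m hnm).trans Set.subset_union_right
    have hKC : ∀ n, K.1 ⊆ C n := fun n => Set.subset_union_left
    have hCanti : ∀ n m, n ≤ m → C m ⊆ C n := by
      intro n m hnm x hx
      rcases hx with hx | hx
      · exact Or.inl hx
      · obtain ⟨_, ⟨k, rfl⟩, _, ⟨hk, rfl⟩, hxk⟩ := hx
        exact haC n k (hnm.trans hk) hxk
    have hCV : ∀ V : Set X, IsOpen V → K.1 ⊆ V → ∃ N, C N ⊆ V := by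
      intro V hV hKV
      obtain ⟨N, hN⟩ := hUbase V hV hKV
      refine ⟨N, ?_⟩
      intro x hx
      rcases hx with hx | hx
      · exact hKV hx
      · obtain ⟨_, ⟨k, rfl⟩, _, ⟨hk, rfl⟩, hxk⟩ := hx
        exact hN (a k) ((haU k).trans (hUanti hk)) hxk
    have hCne : ∀ n, (C n).Nonempty := fun n => K.2.1.mono (hKC n)
    have hCsat : ∀ n, IsSaturatedSet (C n) := by
      intro n
      apply isSaturatedSet_of
      intro x hx
      rw [hC] at hx
      simp only [Set.mem_union, Set.mem_iUnion, not_or, not_exists] at hx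
      obtain ⟨hxK, hxa⟩ := hx
      obtain ⟨V₀, hV₀, hKV₀, hxV₀⟩ := K.2.2.2.exists_open hxK
      have : ∀ m, ∃ V : Set X, IsOpen V ∧ (n ≤ m → (a m).1 ⊆ V) ∧ x ∉ V := by
        intro m
        by_cases hnm : n ≤ m
        · obtain ⟨V, hV, hav, hxv⟩ := (a m).2.2.2.exists_open (hxa m hnm)
          exact ⟨V, hV, fun _ => hav, hxv⟩
        · exact ⟨∅, isOpen_empty, fun h => absurd h hnm, Set.notMem_empty x⟩
      choose V hVopen hVa hxV using this
      refine ⟨V₀ ∪ ⋃ m, V m, hV₀.union (isOpen_iUnion hVopen), ?_, ?_⟩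
      · intro y hy
        rcases hy with hy | hy
        · exact Or.inl (hKV₀ hy)
        · obtain ⟨_, ⟨k, rfl⟩, _, ⟨hk, rfl⟩, hyk⟩ := hy
          exact Or.inr ⟨V k, ⟨k, rfl⟩, hVa k hk hyk⟩
      · rintro (h | ⟨_, ⟨k, rfl⟩, h⟩)
        · exact hxV₀ h
        · exact hxV k h
    have hCcomp : ∀ n, IsCompact (C n) := by
      intro n
      classical
      apply isCompact_of_finite_subcover
      intro ι Us hUs hcov
      obtain ⟨t, ht⟩ := K.2.2.1.elim_finite_subcover Us hUs ((hKC n).trans hcov)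
      have hWopen : IsOpen (⋃ i ∈ t, Us i) := isOpen_biUnion fun i _ => hUs i
      obtain ⟨N, hN⟩ := hCV (⋃ i ∈ t, Us i) hWopen ht
      have hcov' : ∀ m : ℕ, ∃ tm : Finset ι, n ≤ m → (a m).1 ⊆ ⋃ i ∈ tm, Us i := by
        intro m
        by_cases hnm : n ≤ m
        · obtain ⟨tm, htm⟩ := (a m).2.2.1.elim_finite_subcover Us hUs ((haC n m hnm).trans hcov)
          exact ⟨tm, fun _ => htm⟩
        · exact ⟨∅, fun h => absurd h hnm⟩
      choose tm htm using hcov'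
      refine ⟨t ∪ (Finset.Ico n N).biUnion tm, ?_⟩
      intro x hx
      have htsub : ∀ (s : Finset ι), s ⊆ t ∪ (Finset.Ico n N).biUnion tm →
          ∀ y, y ∈ ⋃ i ∈ s, Us i → y ∈ ⋃ i ∈ t ∪ (Finset.Ico n N).biUnion tm, Us i := by
        intro s hsub y hy
        obtain ⟨_, ⟨i, rfl⟩, _, ⟨hi, rfl⟩, hyi⟩ := hy
        exact Set.mem_biUnion (hsub hi) hyi
      rcases hx with hx | hx
      · exact htsub t Finset.subset_union_left x (ht hx)
      · obtain ⟨_, ⟨k, rfl⟩, _, ⟨hk, rfl⟩, hxk⟩ := hx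
        by_cases hkN : k < N
        · exact htsub (tm k)
            ((Finset.subset_biUnion_of_mem tm (Finset.mem_Ico.mpr ⟨hk, hkN⟩)).trans
              Finset.subset_union_right) x (htm k hk hxk)
        · push_neg at hkN
          exact htsub t Finset.subset_union_left x (hN (haC N k hkN hxk))
    set E : ℕ → QNE X := fun n => ⟨C n, hCne n, hCcomp n, hCsat n⟩ with hE
    refine ⟨Set.range E, ?_, ⟨E 0, 0, rfl⟩, ?_, ?_, ?_⟩
    · rintro _ ⟨n, rfl⟩
      exact ⟨a n, haA n, haC n n le_rfl⟩
    · rintro _ ⟨i, rfl⟩ _ ⟨j, rfl⟩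
      exact ⟨E (max i j), ⟨max i j, rfl⟩, hCanti i (max i j) (le_max_left i j),
        hCanti j (max i j) (le_max_right i j)⟩
    · rintro _ ⟨n, rfl⟩
      exact hKC n
    · intro L hL
      rw [QNE.le_def]
      intro x hx
      by_contra hxK
      obtain ⟨V, hV, hKV, hxV⟩ := K.2.2.2.exists_open hxK
      obtain ⟨N, hN⟩ := hCV V hV hKV
      exact hxV (hN (hL ⟨N, rfl⟩ hx))
  · -- easy direction: oneStep A ⊆ scottCl A
    rintro x ⟨D, hDA, hne, hdir, hlub⟩
    have hclosed : IsClosed (scottCl A) := isClosed_closure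
    rw [Topology.IsScott.isClosed_iff_isLowerSet_and_dirSupClosed] at hclosed
    have hD : D ⊆ scottCl A := by
      intro d hd
      obtain ⟨b, hbA, hdb⟩ := hDA hd
      exact hclosed.1 hdb (subset_closure hbA)
    exact hclosed.2 hD hne hdir hlub
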